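/- The infimum of E^Q[M_0] over all Q-supermartingales (M_t)_{t=0}^n for which there exists a P-supermartingale (N_t)_{t=0}^n with N_0 = 0 a.s. and max_{t=1,…,n} ( l(M_t − S_t) − α_t ) ≤ N_n a.s., equals the infimum of E^Q[M_0] over all Q-supermartingales (M_k)_{k=0}^n satisfying the lookback constraint E^P[ max_{k=1,…,n} ( l(M_k − S_k) − α_k ) ] ≤ 0. -/

import Mathlib

open MeasureTheory Filter
open scoped MeasureTheory

/-- A supermartingale (under measure `μ`) on the discrete time interval `{a,…,b}`. -/
def IsSupermartingaleOn {Ω : Type*} {m0 : MeasurableSpace Ω}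
    (𝓕 : MeasureTheory.Filtration ℕ m0) (μ : Measure Ω)
    (M : ℕ → Ω → ℝ) (a b : ℕ) : Prop :=
  (∀ k, a ≤ k → k ≤ b → StronglyMeasurable[𝓕 k] (M k)) ∧
  (∀ k, a ≤ k → k ≤ b → Integrable (M k) μ) ∧
  (∀ k, a ≤ k → k < b → (μ[M (k + 1)|𝓕 k]) ≤ᵐ[μ] M k)

private lemma sup'_integrable {Ω : Type*} {m : MeasurableSpace Ω} {μ : Measure Ω}
    {s : Finset ℕ} (hs : s.Nonempty) {f : ℕ → Ω → ℝ}
    (hf : ∀ k ∈ s, Integrable (f k) μ) :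
    Integrable (fun ω => s.sup' hs (fun k => f k ω)) μ := by
  induction hs using Finset.Nonempty.cons_induction with
  | singleton a =>
    have h : (fun ω => ({a} : Finset ℕ).sup' (Finset.singleton_nonempty a) fun k => f k ω)
        = f a := by funext ω; exact Finset.sup'_singleton _
    rw [h]
    exact hf a (Finset.mem_singleton_self a)
  | cons a t ha ht ih =>
    have h : (fun ω => (Finset.cons a t ha).sup' (Finset.cons_nonempty ha) fun k => f k ω)
        = fun ω => f a ω ⊔ t.sup' ht (fun k => f k ω) := by
      funext ω; exact Finset.sup'_cons ht _
    rw [h]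
    exact (hf a (by simp)).sup (ih fun k hk => hf k (Finset.mem_cons_of_mem hk))

private lemma sup'_sm {Ω : Type*} {m : MeasurableSpace Ω}
    {s : Finset ℕ} (hs : s.Nonempty) {f : ℕ → Ω → ℝ}
    (hf : ∀ k ∈ s, StronglyMeasurable[m] (f k)) :
    StronglyMeasurable[m] (fun ω => s.sup' hs (fun k => f k ω)) := by
  induction hs using Finset.Nonempty.cons_induction with
  | singleton a =>
    have h : (fun ω => ({a} : Finset ℕ).sup' (Finset.singleton_nonempty a) fun k => f k ω)
        = f a := by funext ω; exact Finset.sup'_singleton _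
    rw [h]
    exact hf a (Finset.mem_singleton_self a)
  | cons a t ha ht ih =>
    have h : (fun ω => (Finset.cons a t ha).sup' (Finset.cons_nonempty ha) fun k => f k ω)
        = fun ω => f a ω ⊔ t.sup' ht (fun k => f k ω) := by
      funext ω; exact Finset.sup'_cons ht _
    rw [h]
    exact (hf a (by simp)).sup (ih fun k hk => hf k (Finset.mem_cons_of_mem hk))

/-- Proposition 3.8: the infimum of `E^Q[M₀]` over `Q`-supermartingales `M` for
which there is a `P`-supermartingale `N` with `N₀ = 0` and
`max_{t=1,…,n}(l(M_t - S_t) - α_t) ≤ N_n` a.s. equals the infimum of `E^Q[M₀]`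
over `Q`-supermartingales satisfying the lookback constraint
`E^P[max_{k=1,…,n}(l(M_k - S_k) - α_k)] ≤ 0`. -/
theorem stmt_11
    {Ω : Type*} {m0 : MeasurableSpace Ω} (P Q : Measure Ω)
    [IsProbabilityMeasure P] [IsProbabilityMeasure Q]
    (hPQ : P ≪ Q) (hQP : Q ≪ P)
    (𝓕 : Filtration ℕ m0) (n : ℕ) (hn : 1 ≤ n)
    (htriv : ∀ s : Set Ω, MeasurableSet[𝓕 0] s → P s = 0 ∨ P s = 1)
    (l : ℝ → ℝ) (hconv : ConvexOn ℝ Set.univ l) (hdec : Antitone l)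
    (hbdd : ∃ c : ℝ, ∀ x : ℝ, c ≤ l x)
    (S : ℕ → Ω → ℝ) (hS : Adapted 𝓕 S) (hSint : ∀ k, Integrable (S k) Q)
    (α : ℕ → ℝ) :
    sInf {x : ℝ | ∃ M N : ℕ → Ω → ℝ,
        IsSupermartingaleOn 𝓕 Q M 0 n ∧
        (∀ k, 1 ≤ k → k ≤ n → Integrable (fun ω => l (M k ω - S k ω)) P) ∧
        IsSupermartingaleOn 𝓕 P N 0 n ∧
        (N 0 =ᵐ[P] fun _ => (0 : ℝ)) ∧
        (∀ᵐ ω ∂P, (Finset.Icc 1 n).sup' (Finset.nonempty_Icc.mpr hn)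
            (fun t => l (M t ω - S t ω) - α t) ≤ N n ω) ∧
        x = ∫ ω, M 0 ω ∂Q}
    =
    sInf {x : ℝ | ∃ M : ℕ → Ω → ℝ,
        IsSupermartingaleOn 𝓕 Q M 0 n ∧
        (∀ k, 1 ≤ k → k ≤ n → Integrable (fun ω => l (M k ω - S k ω)) P) ∧
        (∫ ω, (Finset.Icc 1 n).sup' (Finset.nonempty_Icc.mpr hn)
            (fun k => l (M k ω - S k ω) - α k) ∂P ≤ 0) ∧
        x = ∫ ω, M 0 ω ∂Q} := by
  congr 1
  ext x
  simp only [Set.mem_setOf_eq]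
  constructor
  · rintro ⟨M, N, hM, hint, hN, hN0, hle, hx⟩
    refine ⟨M, hM, hint, ?_, hx⟩
    -- the max is integrable
    set X : Ω → ℝ := fun ω => (Finset.Icc 1 n).sup' (Finset.nonempty_Icc.mpr hn)
        (fun k => l (M k ω - S k ω) - α k) with hXdef
    have hXint : Integrable X P := by
      apply sup'_integrable
      intro k hk
      rw [Finset.mem_Icc] at hk
      exact (hint k hk.1 hk.2).sub (integrable_const _)
    -- ∫ N (k) ≤ ∫ N 0 for all k ≤ n
    have hchain : ∀ k, k ≤ n → ∫ ω, N k ω ∂P ≤ ∫ ω, N 0 ω ∂P := by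
      intro k
      induction k with
      | zero => intro _; exact le_refl _
      | succ j ih =>
        intro hj
        have hj' : j < n := hj
        have h1 : ∫ ω, N (j + 1) ω ∂P ≤ ∫ ω, N j ω ∂P := by
          rw [← integral_condExp (𝓕.le j) (f := N (j + 1))]
          exact integral_mono_ae integrable_condExp
            (hN.2.1 j (Nat.zero_le _) hj'.le) (hN.2.2 j (Nat.zero_le _) hj')
        exact h1.trans (ih hj'.le)
    have hN0int : ∫ ω, N 0 ω ∂P = 0 := by
      rw [integral_congr_ae hN0]; simp
    calc ∫ ω, X ω ∂P ≤ ∫ ω, N n ω ∂P :=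
          integral_mono_ae hXint (hN.2.1 n (Nat.zero_le _) le_rfl) hle
      _ ≤ ∫ ω, N 0 ω ∂P := hchain n le_rfl
      _ = 0 := hN0int
  · rintro ⟨M, hM, hint, hEX, hx⟩
    set X : Ω → ℝ := fun ω => (Finset.Icc 1 n).sup' (Finset.nonempty_Icc.mpr hn)
        (fun k => l (M k ω - S k ω) - α k) with hXdef
    have hXint : Integrable X P := by
      apply sup'_integrable
      intro k hk
      rw [Finset.mem_Icc] at hk
      exact (hint k hk.1 hk.2).sub (integrable_const _)
    have hXsm : StronglyMeasurable[𝓕 n] X := by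
      apply sup'_sm
      intro k hk
      rw [Finset.mem_Icc] at hk
      have hMk : StronglyMeasurable[𝓕 n] (M k) :=
        (hM.1 k (Nat.zero_le _) hk.2).mono (𝓕.mono hk.2)
      have hSk : StronglyMeasurable[𝓕 n] (S k) := ((hS k).mono (𝓕.mono hk.2) le_rfl).stronglyMeasurable
      have hsub : StronglyMeasurable[𝓕 n] (fun ω => M k ω - S k ω) := hMk.sub hSk
      exact ((hdec.measurable.comp hsub.measurable).stronglyMeasurable).sub
        stronglyMeasurable_const
    set Y : Ω → ℝ := P[X|𝓕 0] with hYdef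
    have hYsm : StronglyMeasurable[𝓕 0] Y := stronglyMeasurable_condExp
    have hYint : Integrable Y P := integrable_condExp
    -- Y ≤ 0 a.e. from triviality of 𝓕 0 and ∫ Y = ∫ X ≤ 0
    have hYle : ∀ᵐ ω ∂P, Y ω ≤ 0 := by
      have hintY : ∫ ω, Y ω ∂P ≤ 0 := by
        rw [hYdef, integral_condExp (𝓕.le 0)]; exact hEX
      set s : Set Ω := {ω | 0 < Y ω} with hsdef
      have hsmeas : MeasurableSet[𝓕 0] s :=
        (hYsm.measurable) measurableSet_Ioi
      rcases htriv s hsmeas with h0 | h1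
      · have : ∀ᵐ ω ∂P, ω ∉ s := by
          rw [ae_iff]
          simpa [hsdef] using h0
        filter_upwards [this] with ω hω
        simpa [hsdef] using hω
      · exfalso
        have hcompl : P sᶜ = 0 := by
          have := measure_compl ((𝓕.le 0) s hsmeas) (measure_ne_top P s)
          rw [h1] at this
          simpa using this
        have hae : ∀ᵐ ω ∂P, ω ∈ s := by
          rw [ae_iff]
          exact hcompl
        have hpos : 0 < ∫ ω, Y ω ∂P := by
          rw [integral_pos_iff_support_of_nonneg_ae ?_ hYint]
          · have hsub : s ⊆ Function.support Y := by
              intro ω hω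
              exact ne_of_gt hω
            calc (0 : ENNReal) < 1 := by norm_num
              _ = P s := h1.symm
              _ ≤ P (Function.support Y) := measure_mono hsub
          · filter_upwards [hae] with ω hω
            exact le_of_lt hω
        linarith
    -- define N
    set N : ℕ → Ω → ℝ := fun k ω => (P[X|𝓕 k]) ω - Y ω with hNdef
    have hNsm : ∀ k, StronglyMeasurable[𝓕 k] (N k) := fun k =>
      stronglyMeasurable_condExp.sub (hYsm.mono (𝓕.mono (Nat.zero_le k)))
    have hNint : ∀ k, Integrable (N k) P := fun k => integrable_condExp.sub hYint
    have hNsuper : IsSupermartingaleOn 𝓕 P N 0 n := by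
      refine ⟨fun k _ _ => hNsm k, fun k _ _ => hNint k, fun k _ hk => ?_⟩
      have h1 : P[N (k + 1)|𝓕 k] =ᵐ[P] P[P[X|𝓕 (k + 1)]|𝓕 k] - P[Y|𝓕 k] := by
        have : N (k + 1) = (P[X|𝓕 (k + 1)]) - Y := rfl
        rw [this]
        exact condExp_sub integrable_condExp hYint _
      have h2 : P[P[X|𝓕 (k + 1)]|𝓕 k] =ᵐ[P] P[X|𝓕 k] :=
        condExp_condExp_of_le (𝓕.mono (Nat.le_succ k)) (𝓕.le (k + 1))
      have h3 : P[Y|𝓕 k] = Y :=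
        condExp_of_stronglyMeasurable (𝓕.le k) (hYsm.mono (𝓕.mono (Nat.zero_le k))) hYint
      filter_upwards [h1, h2] with ω hω1 hω2
      rw [hω1]
      simp only [Pi.sub_apply, hω2, h3]
      exact le_rfl
    have hN0 : N 0 =ᵐ[P] fun _ => (0 : ℝ) := by
      apply Filter.Eventually.of_forall
      intro ω
      simp [hNdef, hYdef]
    have hcond : P[X|𝓕 n] = X :=
      condExp_of_stronglyMeasurable (𝓕.le n) hXsm hXint
    have hle : ∀ᵐ ω ∂P, (Finset.Icc 1 n).sup' (Finset.nonempty_Icc.mpr hn)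
        (fun t => l (M t ω - S t ω) - α t) ≤ N n ω := by
      filter_upwards [hYle] with ω hω2
      have : N n ω = X ω - Y ω := by rw [hNdef]; simp [hcond]
      rw [this]
      have : X ω = (Finset.Icc 1 n).sup' (Finset.nonempty_Icc.mpr hn)
          (fun t => l (M t ω - S t ω) - α t) := rfl
      linarith
    exact ⟨M, N, hM, hint, hNsuper, hN0, hle, hx⟩
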